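/- If ξ is gamma distributed with shape x/b and scale b (x > 0), and f : (0,∞) → ℝ is smooth with bounded derivatives up to order 2, then E[f(ξ) ln ξ] = f(x) ln x + (xb/2)( f''(x) ln x + 2 f'(x)/x − f(x)/x² ) + o(b) as b → 0⁺. -/

import Mathlib

open Real MeasureTheory Filter

/-- The gamma kernel (gamma density with shape `x/b`, scale `b`). -/
noncomputable def gammaKernel (x b t : ℝ) : ℝ :=
  t ^ (x / b - 1) * Real.exp (-t / b) / (b ^ (x / b) * Real.Gamma (x / b))


section aux
open Set


lemma gk_nonneg {x b t : ℝ} (hx : 0 < x) (hb : 0 < b) (ht : 0 < t) :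
    0 ≤ gammaKernel x b t := by
  unfold gammaKernel
  have h := Real.Gamma_pos_of_pos (div_pos hx hb)
  positivity

lemma gk_moment {x b : ℝ} (hx : 0 < x) (hb : 0 < b) (s : ℝ) (hs : 0 < x / b + s) :
    IntegrableOn (fun t => t ^ s * gammaKernel x b t) (Set.Ioi 0) ∧
    ∫ t in Set.Ioi (0:ℝ), t ^ s * gammaKernel x b t
      = b ^ s * (Real.Gamma (x / b + s) / Real.Gamma (x / b)) := by
  have hk : 0 < x / b := div_pos hx hb
  have hG : 0 < Real.Gamma (x / b) := Real.Gamma_pos_of_pos hk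
  have hc : (0:ℝ) < b ^ (x/b) * Real.Gamma (x/b) := by positivity
  have key : ∀ t ∈ Set.Ioi (0:ℝ), t ^ s * gammaKernel x b t
      = (b ^ (x/b) * Real.Gamma (x/b))⁻¹ * (t ^ (x/b + s - 1) * Real.exp (-(b⁻¹ * t))) := by
    intro t ht
    have ht' : (0:ℝ) < t := ht
    unfold gammaKernel
    rw [show x/b + s - 1 = s + (x/b - 1) by ring, Real.rpow_add ht']
    rw [show -(b⁻¹ * t) = -t/b by field_simp]
    field_simp
  constructor
  · apply (IntegrableOn.congr_fun ?_ (fun t ht => (key t ht).symm) measurableSet_Ioi)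
    apply Integrable.const_mul
    have := integrableOn_rpow_mul_exp_neg_mul_rpow (s := x/b + s - 1) (p := 1) (b := b⁻¹)
      (by linarith) zero_lt_one (by positivity)
    refine (this.congr_fun (fun t ht => ?_) measurableSet_Ioi)
    simp only [Real.rpow_one]
    ring_nf
  · rw [setIntegral_congr_fun measurableSet_Ioi key, integral_const_mul,
      integral_rpow_mul_exp_neg_mul_Ioi hs (by positivity : (0:ℝ) < b⁻¹)]
    rw [one_div, inv_inv, Real.rpow_add hb]
    field_simp

lemma Gamma_ratio (k : ℝ) (hk : 0 < k) (j : ℕ) :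
    Real.Gamma (k + j) = Real.Gamma k * ∏ i ∈ Finset.range j, (k + i) := by
  induction j with
  | zero => simp
  | succ n ih =>
    have hkn : k + n ≠ 0 := by positivity
    rw [Finset.prod_range_succ, show (k + (n+1:ℕ) : ℝ) = (k + n) + 1 by push_cast; ring,
      Real.Gamma_add_one hkn, ih]
    ring

/-- value of natural moments -/
lemma gk_moment_nat {x b : ℝ} (hx : 0 < x) (hb : 0 < b) (j : ℕ) :
    IntegrableOn (fun t => t ^ j * gammaKernel x b t) (Set.Ioi 0) ∧
    ∫ t in Set.Ioi (0:ℝ), t ^ j * gammaKernel x b t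
      = ∏ i ∈ Finset.range j, (x + i * b) := by
  have hk : 0 < x / b := div_pos hx hb
  have hG : 0 < Real.Gamma (x / b) := Real.Gamma_pos_of_pos hk
  have hs : 0 < x / b + (j:ℝ) := by positivity
  obtain ⟨hint, hval⟩ := gk_moment hx hb (j : ℝ) hs
  have hcong : ∀ t ∈ Set.Ioi (0:ℝ), t ^ (j:ℝ) * gammaKernel x b t
      = t ^ j * gammaKernel x b t := by
    intro t ht
    rw [Real.rpow_natCast]
  constructor
  · exact hint.congr_fun hcong measurableSet_Ioi
  · rw [← setIntegral_congr_fun measurableSet_Ioi hcong, hval, Gamma_ratio _ hk j]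
    rw [mul_comm (Real.Gamma (x/b)), mul_div_assoc, div_self (ne_of_gt hG), mul_one,
      Real.rpow_natCast,
      show (b:ℝ)^j = ∏ _i ∈ Finset.range j, b by simp, ← Finset.prod_mul_distrib]
    refine Finset.prod_congr rfl (fun i _ => ?_)
    field_simp

lemma gk_moment_neg_one {x b : ℝ} (hx : 0 < x) (hb : 0 < b) (hbx : b < x) :
    IntegrableOn (fun t => t⁻¹ * gammaKernel x b t) (Set.Ioi 0) ∧
    ∫ t in Set.Ioi (0:ℝ), t⁻¹ * gammaKernel x b t = 1 / (x - b) := by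
  have hk : 0 < x / b := div_pos hx hb
  have hk1 : 0 < x / b - 1 := by
    rw [sub_pos, lt_div_iff₀ hb]; linarith
  have hs : 0 < x / b + (-1 : ℝ) := by linarith
  obtain ⟨hint, hval⟩ := gk_moment hx hb (-1) hs
  have hcong : ∀ t ∈ Set.Ioi (0:ℝ), t ^ (-1:ℝ) * gammaKernel x b t
      = t⁻¹ * gammaKernel x b t := by
    intro t ht
    rw [Real.rpow_neg_one]
  have hG : 0 < Real.Gamma (x / b) := Real.Gamma_pos_of_pos hk
  have hGrec : Real.Gamma (x / b) = (x/b - 1) * Real.Gamma (x/b - 1) := by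
    rw [show x/b = (x/b - 1) + 1 by ring, Real.Gamma_add_one (ne_of_gt hk1)]
    ring
  constructor
  · exact hint.congr_fun hcong measurableSet_Ioi
  · rw [← setIntegral_congr_fun measurableSet_Ioi hcong, hval,
      show x / b + (-1:ℝ) = x/b - 1 by ring, hGrec, Real.rpow_neg_one]
    have h1 : Real.Gamma (x/b - 1) ≠ 0 := ne_of_gt (Real.Gamma_pos_of_pos hk1)
    rw [show (x/b - 1) * Real.Gamma (x/b-1) = Real.Gamma (x/b-1) * (x/b-1) by ring,
      div_mul_eq_div_div, div_self h1, one_div, ← mul_inv, one_div]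
    congr 1
    field_simp

/-- integral of a polynomial against the kernel -/
lemma gk_poly {x b : ℝ} (hx : 0 < x) (hb : 0 < b) (c : ℕ → ℝ) (n : ℕ) :
    IntegrableOn (fun t => (∑ j ∈ Finset.range n, c j * t ^ j) * gammaKernel x b t)
      (Set.Ioi 0) ∧
    ∫ t in Set.Ioi (0:ℝ), (∑ j ∈ Finset.range n, c j * t ^ j) * gammaKernel x b t
      = ∑ j ∈ Finset.range n, c j * ∏ i ∈ Finset.range j, (x + i * b) := by
  induction n with
  | zero => simp
  | succ n ih =>
    obtain ⟨ih1, ih2⟩ := ih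
    obtain ⟨hjint, hjval⟩ := gk_moment_nat hx hb n
    have key : ∀ t : ℝ, (∑ j ∈ Finset.range (n+1), c j * t ^ j) * gammaKernel x b t
        = (∑ j ∈ Finset.range n, c j * t ^ j) * gammaKernel x b t
          + c n * (t ^ n * gammaKernel x b t) := by
      intro t
      rw [Finset.sum_range_succ]
      ring
    constructor
    · refine (IntegrableOn.congr_fun ?_ (fun t _ => (key t).symm) measurableSet_Ioi)
      exact ih1.add (hjint.const_mul _)
    · calc ∫ t in Set.Ioi (0:ℝ), (∑ j ∈ Finset.range (n+1), c j * t ^ j) * gammaKernel x b t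
          = ∫ t in Set.Ioi (0:ℝ), ((∑ j ∈ Finset.range n, c j * t ^ j) * gammaKernel x b t
            + c n * (t ^ n * gammaKernel x b t)) := by
            exact setIntegral_congr_fun measurableSet_Ioi (fun t _ => key t)
        _ = _ := by
            rw [integral_add ih1 (hjint.const_mul _), ih2, integral_const_mul, hjval,
              Finset.sum_range_succ]


section derivs
variable {f : ℝ → ℝ}

lemma d1 (hf : ContDiffOn ℝ 2 f (Set.Ioi 0)) :
    DifferentiableOn ℝ f (Set.Ioi 0) ∧ ContDiffOn ℝ 1 (deriv f) (Set.Ioi 0) := by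
  rw [show (2 : WithTop ℕ∞) = 1 + 1 by norm_num,
    contDiffOn_succ_iff_deriv_of_isOpen isOpen_Ioi] at hf
  exact ⟨hf.1, hf.2.2⟩

-- derivative of g = f * log on Ioi 0
lemma hasDerivAt_g (hf : ContDiffOn ℝ 2 f (Set.Ioi 0)) {t : ℝ} (ht : 0 < t) :
    HasDerivAt (fun s => f s * Real.log s) (deriv f t * Real.log t + f t * t⁻¹) t := by
  have hfd : DifferentiableAt ℝ f t :=
    ((d1 hf).1.differentiableAt (Ioi_mem_nhds ht))
  exact (hfd.hasDerivAt).mul (Real.hasDerivAt_log (ne_of_gt ht))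

lemma hasDerivAt_g' (hf : ContDiffOn ℝ 2 f (Set.Ioi 0)) {t : ℝ} (ht : 0 < t) :
    HasDerivAt (fun s => deriv f s * Real.log s + f s * s⁻¹)
      (deriv (deriv f) t * Real.log t + 2 * deriv f t / t - f t / t ^ 2) t := by
  have hfd : DifferentiableAt ℝ f t :=
    ((d1 hf).1.differentiableAt (Ioi_mem_nhds ht))
  have hfd2 : DifferentiableAt ℝ (deriv f) t :=
    ((d1 hf).2.differentiableOn (by norm_num)).differentiableAt (Ioi_mem_nhds ht)
  have h1 : HasDerivAt (fun s => deriv f s * Real.log s)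
      (deriv (deriv f) t * Real.log t + deriv f t * t⁻¹) t :=
    (hfd2.hasDerivAt).mul (Real.hasDerivAt_log (ne_of_gt ht))
  have h2 : HasDerivAt (fun s : ℝ => f s * s⁻¹)
      (deriv f t * t⁻¹ + f t * (-(t^2)⁻¹)) t :=
    (hfd.hasDerivAt).mul (hasDerivAt_inv (ne_of_gt ht))
  convert! h1.fun_add h2 using 1
  ring

lemma deriv_g_eq (hf : ContDiffOn ℝ 2 f (Set.Ioi 0)) {t : ℝ} (ht : 0 < t) :
    deriv (fun s => f s * Real.log s) t = deriv f t * Real.log t + f t * t⁻¹ :=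
  (hasDerivAt_g hf ht).deriv

lemma hasDerivAt_deriv_g (hf : ContDiffOn ℝ 2 f (Set.Ioi 0)) {t : ℝ} (ht : 0 < t) :
    HasDerivAt (deriv (fun s => f s * Real.log s))
      (deriv (deriv f) t * Real.log t + 2 * deriv f t / t - f t / t ^ 2) t := by
  have heq : (fun s => deriv f s * Real.log s + f s * s⁻¹)
      =ᶠ[nhds t] deriv (fun s => f s * Real.log s) := by
    filter_upwards [Ioi_mem_nhds ht] with s hs
    exact (deriv_g_eq hf hs).symm
  exact (hasDerivAt_g' hf ht).congr_of_eventuallyEq heq.symm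

lemma continuousOn_g'' (hf : ContDiffOn ℝ 2 f (Set.Ioi 0)) :
    ContinuousOn (fun t => deriv (deriv f) t * Real.log t + 2 * deriv f t / t - f t / t ^ 2)
      (Set.Ioi 0) := by
  have hc0 : ContinuousOn f (Set.Ioi 0) := hf.continuousOn
  have hc1 : ContinuousOn (deriv f) (Set.Ioi 0) := (d1 hf).2.continuousOn
  have hc2 : ContinuousOn (deriv (deriv f)) (Set.Ioi 0) := by
    have := (d1 hf).2
    rw [show (1 : WithTop ℕ∞) = 0 + 1 by norm_num,
      contDiffOn_succ_iff_deriv_of_isOpen isOpen_Ioi] at this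
    exact this.2.2.continuousOn
  have hlog : ContinuousOn Real.log (Set.Ioi 0) :=
    Real.continuousOn_log.mono (fun t ht => ne_of_gt ht)
  refine ((hc2.mul hlog).add ((continuousOn_const.mul hc1).div continuousOn_id
    (fun t ht => ne_of_gt ht))).sub (hc0.div (continuousOn_pow 2) (fun t ht => by simp at ht ⊢; positivity))
end derivs


lemma taylor_quad_bound {g g' g'' : ℝ → ℝ} {x δ ε : ℝ} (hδ : 0 < δ) (hε : 0 ≤ ε)
    (hg : ∀ y ∈ Set.Icc (x - δ) (x + δ), HasDerivAt g (g' y) y)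
    (hg' : ∀ y ∈ Set.Icc (x - δ) (x + δ), HasDerivAt g' (g'' y) y)
    (hcl : ∀ y ∈ Set.Icc (x - δ) (x + δ), |g'' y - g'' x| ≤ ε) :
    ∀ t ∈ Set.Icc (x - δ) (x + δ),
      |g t - g x - g' x * (t - x) - g'' x / 2 * (t - x) ^ 2| ≤ ε * (t - x) ^ 2 := by
  set s := Set.Icc (x - δ) (x + δ) with hs
  have hxs : x ∈ s := by constructor <;> simp <;> linarith
  have hconv : Convex ℝ s := convex_Icc _ _
  -- step 1 : |g' y - g' x - g'' x * (y - x)| ≤ ε * |y - x| on s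
  have step1 : ∀ y ∈ s, |g' y - g' x - g'' x * (y - x)| ≤ ε * |y - x| := by
    intro y hy
    have := hconv.norm_image_sub_le_of_norm_hasDerivWithin_le
      (f := fun z => g' z - g'' x * z) (f' := fun z => g'' z - g'' x)
      (fun z hz => by
        simpa using ((hg' z hz).fun_sub ((hasDerivAt_id z).const_mul (g'' x))).hasDerivWithinAt)
      (fun z hz => by simpa [Real.norm_eq_abs] using hcl z hz) hxs hy
    rw [Real.norm_eq_abs, Real.norm_eq_abs] at this
    calc |g' y - g' x - g'' x * (y - x)|
        = |(g' y - g'' x * y) - (g' x - g'' x * x)| := by ring_nf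
      _ ≤ ε * |y - x| := this
  intro t ht
  -- step 2 on uIcc x t
  have huicc : Set.uIcc x t ⊆ s := Set.uIcc_subset_Icc hxs ht
  have hbd : ∀ y ∈ Set.uIcc x t, |y - x| ≤ |t - x| := by
    intro y hy
    rcases le_total x t with h | h
    · rw [Set.uIcc_of_le h] at hy
      rw [abs_of_nonneg (by linarith [hy.1]), abs_of_nonneg (by linarith)]
      linarith [hy.2]
    · rw [Set.uIcc_of_ge h] at hy
      rw [abs_of_nonpos (by linarith [hy.2]), abs_of_nonpos (by linarith)]
      linarith [hy.1]
  have key := (convex_uIcc x t).norm_image_sub_le_of_norm_hasDerivWithin_le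
    (f := fun z => g z - g' x * z - g'' x / 2 * (z - x) ^ 2)
    (f' := fun z => g' z - g' x - g'' x * (z - x))
    (fun z hz => by
      have h1 := hg z (huicc hz)
      have h2 : HasDerivAt (fun z : ℝ => g' x * z) (g' x) z := by
        simpa using (hasDerivAt_id z).const_mul (g' x)
      have h3 : HasDerivAt (fun z : ℝ => g'' x / 2 * (z - x) ^ 2) (g'' x * (z - x)) z := by
        have : HasDerivAt (fun z : ℝ => (z - x) ^ 2) (2 * (z - x)) z := by
          simpa using (((hasDerivAt_id z).sub_const x).fun_pow 2)
        have := this.const_mul (g'' x / 2)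
        convert! this using 1
        ring
      exact ((h1.sub h2).sub h3).hasDerivWithinAt)
    (C := ε * |t - x|)
    (fun z hz => by
      rw [Real.norm_eq_abs]
      calc |g' z - g' x - g'' x * (z - x)| ≤ ε * |z - x| := step1 z (huicc hz)
        _ ≤ ε * |t - x| := by nlinarith [hbd z hz, abs_nonneg (z - x)])
    (Set.left_mem_uIcc) (Set.right_mem_uIcc)
  rw [Real.norm_eq_abs, Real.norm_eq_abs] at key
  calc |g t - g x - g' x * (t - x) - g'' x / 2 * (t - x) ^ 2|
      = |(g t - g' x * t - g'' x / 2 * (t - x) ^ 2)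
          - (g x - g' x * x - g'' x / 2 * (x - x) ^ 2)| := by ring_nf
    _ ≤ ε * |t - x| * |t - x| := key
    _ = ε * (t - x) ^ 2 := by rw [mul_assoc, ← abs_mul, ← sq, abs_sq]



lemma abs_log_le {t : ℝ} (ht : 0 < t) : |Real.log t| ≤ t + t⁻¹ := by
  rcases le_or_gt 1 t with h | h
  · rw [abs_of_nonneg (Real.log_nonneg h)]
    have := Real.log_le_sub_one_of_pos ht
    have : 0 < t⁻¹ := by positivity
    linarith [Real.log_le_sub_one_of_pos ht]
  · rw [abs_of_nonpos (Real.log_nonpos (le_of_lt ht) (le_of_lt h))]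
    have h1 : Real.log t⁻¹ ≤ t⁻¹ - 1 := Real.log_le_sub_one_of_pos (by positivity)
    rw [Real.log_inv] at h1
    linarith

lemma gk_continuousOn {x b : ℝ} : ContinuousOn (gammaKernel x b) (Set.Ioi 0) := by
  unfold gammaKernel
  apply ContinuousOn.div_const
  apply ContinuousOn.mul
  · exact ContinuousOn.rpow_const continuousOn_id (fun t ht => Or.inl (ne_of_gt ht))
  · exact (Real.continuous_exp.comp ((continuous_id.neg).div_const b)).continuousOn

lemma integrable_g_kernel {x b C : ℝ} {f : ℝ → ℝ} (hx : 0 < x) (hb : 0 < b) (hbx : b < x)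
    (hcont : ContinuousOn f (Set.Ioi 0)) (hC : ∀ t ∈ Set.Ioi (0:ℝ), |f t| ≤ C) :
    IntegrableOn (fun t => f t * Real.log t * gammaKernel x b t) (Set.Ioi 0) := by
  have hC0 : 0 ≤ C := le_trans (abs_nonneg _) (hC 1 (by norm_num))
  have hint1 := (gk_moment_nat hx hb 1).1
  have hintm1 := (gk_moment_neg_one hx hb hbx).1
  have hbound : IntegrableOn
      (fun t => C * (t ^ 1 * gammaKernel x b t) + C * (t⁻¹ * gammaKernel x b t))
      (Set.Ioi 0) := (hint1.const_mul C).add (hintm1.const_mul C)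
  refine Integrable.mono' hbound ?_ ?_
  · refine ContinuousOn.aestronglyMeasurable ?_ measurableSet_Ioi
    refine ((hcont.mul ?_).mul gk_continuousOn)
    exact Real.continuousOn_log.mono (fun t ht => ne_of_gt ht)
  · rw [ae_restrict_iff' measurableSet_Ioi]
    refine Filter.Eventually.of_forall (fun t ht => ?_)
    have ht' : (0:ℝ) < t := ht
    have hK := gk_nonneg (t := t) hx hb ht'
    have h1 : ‖f t * Real.log t * gammaKernel x b t‖
        = |f t| * |Real.log t| * gammaKernel x b t := by
      rw [Real.norm_eq_abs, abs_mul, abs_mul, abs_of_nonneg hK]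
    rw [h1]
    have h2 : |f t| * |Real.log t| ≤ C * (t + t⁻¹) :=
      mul_le_mul (hC t ht) (abs_log_le ht') (abs_nonneg _) hC0
    calc |f t| * |Real.log t| * gammaKernel x b t
        ≤ C * (t + t⁻¹) * gammaKernel x b t := mul_le_mul_of_nonneg_right h2 hK
      _ = C * (t ^ 1 * gammaKernel x b t) + C * (t⁻¹ * gammaKernel x b t) := by ring

end aux


section core
open Set

noncomputable def NbPoly (x b : ℝ) : ℝ :=
  3*x^2+3*x^3+3*x^4 + b*(-2*x+3*x^2+23*x^3+15*x^4) + b^2*(-6*x-2*x^2+115*x^3)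
    + b^3*(-24*x-10*x^2) + b^4*(-120*x)

set_option maxHeartbeats 2000000 in
lemma gk_core {x b C ε δ : ℝ} (hx : 0 < x) (hb : 0 < b) (hbx : b < x) {f : ℝ → ℝ}
    (hf : ContDiffOn ℝ 2 f (Set.Ioi 0))
    (hC : ∀ t ∈ Set.Ioi (0 : ℝ), |f t| ≤ C ∧ |deriv f t| ≤ C ∧ |deriv (deriv f) t| ≤ C)
    (hε : 0 ≤ ε) (hδ : 0 < δ) (hδx : δ ≤ x / 2)
    (hnear : ∀ y ∈ Set.Icc (x - δ) (x + δ),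
      |(deriv (deriv f) y * Real.log y + 2 * deriv f y / y - f y / y ^ 2)
        - (deriv (deriv f) x * Real.log x + 2 * deriv f x / x - f x / x ^ 2)| ≤ ε) :
    |(∫ t in Set.Ioi (0 : ℝ), f t * Real.log t * gammaKernel x b t)
        - f x * Real.log x
        - x * b / 2 * (deriv (deriv f) x * Real.log x + 2 * deriv f x / x - f x / x ^ 2)|
      ≤ ε * x * b
        + ((C + |f x * Real.log x| + |deriv f x * Real.log x + f x * x⁻¹|
            + |deriv (deriv f) x * Real.log x + 2 * deriv f x / x - f x / x ^ 2|) / δ ^ 4)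
          * (b ^ 2 * NbPoly x b / (x - b)) := by
  have hC0 : 0 ≤ C := le_trans (abs_nonneg _) (hC 1 (by norm_num)).1
  set G : ℝ := deriv (deriv f) x * Real.log x + 2 * deriv f x / x - f x / x ^ 2 with hG
  set gx : ℝ := f x * Real.log x with hgx
  set ux : ℝ := deriv f x * Real.log x + f x * x⁻¹ with hux
  set C₂ : ℝ := C + |gx| + |ux| + |G| with hC₂
  have hC₂0 : 0 ≤ C₂ := by positivity
  set K : ℝ → ℝ := gammaKernel x b with hK
  set P : ℝ → ℝ := fun t => gx + ux * (t - x) + G / 2 * (t - x) ^ 2 with hP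
  set T : ℝ → ℝ := fun t => f t * Real.log t - P t with hT
  have hIccpos : ∀ y ∈ Set.Icc (x - δ) (x + δ), (0:ℝ) < y := by
    intro y hy
    have := hy.1
    linarith
  -- near bound
  have hnearT : ∀ t ∈ Set.Icc (x - δ) (x + δ), |T t| ≤ ε * (t - x) ^ 2 := by
    have := taylor_quad_bound (g := fun s => f s * Real.log s)
      (g' := fun s => deriv f s * Real.log s + f s * s⁻¹)
      (g'' := fun s => deriv (deriv f) s * Real.log s + 2 * deriv f s / s - f s / s ^ 2)
      (x := x) hδ hε
      (fun y hy => hasDerivAt_g hf (hIccpos y hy))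
      (fun y hy => hasDerivAt_g' hf (hIccpos y hy))
      hnear
    intro t ht
    have h2 := this t ht
    have : T t = f t * Real.log t - f x * Real.log x - ux * (t - x) - G / 2 * (t - x) ^ 2 := by
      simp only [hT, hP]; ring
    rw [this]
    exact h2
  -- global bound
  set Φ : ℝ → ℝ := fun t => (t-x)^4 * (1 + t + (t-x)^2) + (t-x)^4 * t⁻¹ with hΦ
  have hglob : ∀ t ∈ Set.Ioi (0:ℝ), |T t| ≤ ε * (t - x) ^ 2 + C₂ / δ ^ 4 * Φ t := by
    intro t ht
    have ht' : (0:ℝ) < t := ht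
    by_cases hcase : |t - x| ≤ δ
    · have htI : t ∈ Set.Icc (x - δ) (x + δ) := by
        rw [abs_le] at hcase
        constructor <;> linarith [hcase.1, hcase.2]
      have h1 := hnearT t htI
      have h2 : 0 ≤ Φ t := by
        have h3 : (0:ℝ) < 1 + t + (t-x)^2 := by positivity
        have h4 : (0:ℝ) ≤ (t-x)^4 := by positivity
        have h5 : (0:ℝ) < t⁻¹ := by positivity
        positivity
      have h6 : 0 ≤ C₂ / δ ^ 4 := by positivity
      linarith [mul_nonneg h6 h2]
    · push_neg at hcase
      -- |T t| ≤ C₂ * (1 + t + t⁻¹ + (t-x)^2)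
      have hgt : |f t * Real.log t| ≤ C * (t + t⁻¹) := by
        rw [abs_mul]
        exact mul_le_mul (hC t ht).1 (abs_log_le ht') (abs_nonneg _) hC0
      have htri : |T t| ≤ |f t * Real.log t| + |gx| + |ux| * |t - x| + |G| / 2 * (t-x)^2 := by
        have e1 : T t = ((f t * Real.log t - gx) - ux * (t-x)) - G/2 * (t-x)^2 := by
          simp only [hT, hP]; ring
        rw [e1]
        have t1 := abs_sub (f t * Real.log t) gx
        have t2 := abs_sub (f t * Real.log t - gx) (ux * (t-x))
        have t3 := abs_sub ((f t * Real.log t - gx) - ux * (t-x)) (G/2 * (t-x)^2)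
        rw [abs_mul] at t2
        have t4 : |G/2 * (t-x)^2| = |G|/2 * (t-x)^2 := by
          rw [abs_mul, abs_div, abs_of_nonneg (by positivity : (0:ℝ) ≤ (t-x)^2)]
          simp
        rw [t4] at t3
        linarith
      have habs1 : |t - x| ≤ 1 + (t-x)^2 := by
        nlinarith [abs_nonneg (t-x), sq_abs (t-x)]
      have hbig : |T t| ≤ C₂ * (1 + t + t⁻¹ + (t-x)^2) := by
        have h5 : (0:ℝ) < t⁻¹ := by positivity
        nlinarith [abs_nonneg (f t * Real.log t), abs_nonneg gx, abs_nonneg ux, abs_nonneg G,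
          sq_nonneg (t-x), mul_nonneg (abs_nonneg ux) (sq_nonneg (t-x))]
      have hd4 : δ^4 ≤ (t-x)^4 := by
        calc δ^4 ≤ |t-x|^4 := by
              apply pow_le_pow_left₀ hδ.le hcase.le
          _ = (t-x)^4 := by
              rw [← abs_pow, abs_of_nonneg (by positivity : (0:ℝ) ≤ (t-x)^4)]
      have hS : (0:ℝ) < 1 + t + t⁻¹ + (t-x)^2 := by positivity
      have hΦeq : Φ t = (t-x)^4 * (1 + t + t⁻¹ + (t-x)^2) := by
        simp only [hΦ]; ring
      have hge1 : (1:ℝ) ≤ (t-x)^4/δ^4 := by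
        rw [le_div_iff₀ (by positivity : (0:ℝ) < δ^4)]
        linarith
      have hstep : C₂ * (1 + t + t⁻¹ + (t-x)^2) ≤ C₂ / δ^4 * Φ t := by
        calc C₂ * (1 + t + t⁻¹ + (t-x)^2) = C₂ * (1 + t + t⁻¹ + (t-x)^2) * 1 := by ring
          _ ≤ C₂ * (1 + t + t⁻¹ + (t-x)^2) * ((t-x)^4/δ^4) := by
              exact mul_le_mul_of_nonneg_left hge1 (by positivity)
          _ = C₂ / δ^4 * Φ t := by rw [hΦeq]; ring
      have : 0 ≤ ε * (t-x)^2 := by positivity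
      linarith
  -- integrability of g·K
  have hIg : IntegrableOn (fun t => f t * Real.log t * K t) (Set.Ioi 0) :=
    integrable_g_kernel hx hb hbx hf.continuousOn (fun t ht => (hC t ht).1)
  have hxb0 : (0:ℝ) < x - b := by linarith
  have hxbne : x - b ≠ 0 := ne_of_gt hxb0
  -- P · K
  set c : ℕ → ℝ := fun j => if j = 0 then gx - ux*x + G/2*x^2 else if j = 1 then ux - G*x
    else if j = 2 then G/2 else 0 with hc
  have hPsum : ∀ t : ℝ, P t = ∑ j ∈ Finset.range 3, c j * t ^ j := by
    intro t
    simp only [Finset.sum_range_succ, Finset.sum_range_zero, hc, hP]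
    norm_num
    ring
  obtain ⟨hIP', hVP'⟩ := gk_poly hx hb c 3
  have hfunPK : (fun t => P t * K t) = fun t => (∑ j ∈ Finset.range 3, c j * t ^ j) * K t := by
    funext t; rw [hPsum]
  have hIP : IntegrableOn (fun t => P t * K t) (Set.Ioi 0) := by rw [hfunPK]; exact hIP'
  have hVP : ∫ t in Set.Ioi (0:ℝ), P t * K t = gx + G/2 * (x*b) := by
    rw [hfunPK, hVP']
    simp only [Finset.sum_range_succ, Finset.sum_range_zero, Finset.prod_range_succ,
      Finset.prod_range_zero, hc]
    norm_num
    ring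
  -- T · K
  have hfunTK : (fun t => T t * K t) = fun t => f t * Real.log t * K t - P t * K t := by
    funext t; simp only [hT]; ring
  have hIT : IntegrableOn (fun t => T t * K t) (Set.Ioi 0) := by
    rw [hfunTK]; exact hIg.sub hIP
  have hVT : ∫ t in Set.Ioi (0:ℝ), T t * K t
      = (∫ t in Set.Ioi (0:ℝ), f t * Real.log t * K t) - (gx + G/2*(x*b)) := by
    rw [hfunTK, integral_sub hIg hIP, hVP]
  -- ε-part coefficients
  set e : ℕ → ℝ := fun j => if j = 0 then ε*x^2 else if j = 1 then -(2*ε*x)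
    else if j = 2 then ε else 0 with he
  obtain ⟨hIe, hVe⟩ := gk_poly hx hb e 3
  have hVe' : ∑ j ∈ Finset.range 3, e j * ∏ i ∈ Finset.range j, (x + i * b) = ε*(x*b) := by
    simp only [Finset.sum_range_succ, Finset.sum_range_zero, Finset.prod_range_succ,
      Finset.prod_range_zero, he]
    norm_num
    ring
  have hesum : ∀ t : ℝ, ε * (t-x)^2 = ∑ j ∈ Finset.range 3, e j * t ^ j := by
    intro t
    simp only [Finset.sum_range_succ, Finset.sum_range_zero, he]
    norm_num
    ring
  -- Φ-part coefficients
  set d : ℕ → ℝ := fun j => if j = 0 then x^4+x^6-4*x^3 else if j = 1 then -4*x^3+x^4-6*x^5+6*x^2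
    else if j = 2 then 6*x^2-4*x^3+15*x^4-4*x else if j = 3 then -4*x+6*x^2-20*x^3+1
    else if j = 4 then 1-4*x+15*x^2 else if j = 5 then 1-6*x else if j = 6 then 1 else 0 with hd
  obtain ⟨hId, hVd⟩ := gk_poly hx hb d 7
  obtain ⟨hIm1, hVm1⟩ := gk_moment_neg_one hx hb hbx
  have hfunΦ : ∀ t ∈ Set.Ioi (0:ℝ),
      (∑ j ∈ Finset.range 7, d j * t ^ j) * K t + x^4 * (t⁻¹ * K t) = Φ t * K t := by
    intro t ht
    have ht' : (0:ℝ) < t := ht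
    have hΦt : Φ t = (∑ j ∈ Finset.range 7, d j * t ^ j) + x^4 * t⁻¹ := by
      simp only [Finset.sum_range_succ, Finset.sum_range_zero, hd, hΦ]
      norm_num
      field_simp
      ring
    rw [hΦt]
    ring
  have hIΦ : IntegrableOn (fun t => Φ t * K t) (Set.Ioi 0) :=
    IntegrableOn.congr_fun (hId.add (hIm1.const_mul (x^4))) hfunΦ measurableSet_Ioi
  have hVΦ : ∫ t in Set.Ioi (0:ℝ), Φ t * K t = b^2 * NbPoly x b / (x - b) := by
    rw [← setIntegral_congr_fun measurableSet_Ioi hfunΦ,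
      integral_add hId (hIm1.const_mul (x^4)), hVd, integral_const_mul, hVm1]
    simp only [Finset.sum_range_succ, Finset.sum_range_zero, Finset.prod_range_succ,
      Finset.prod_range_zero, hd]
    norm_num [NbPoly]
    field_simp
    ring
  -- the bound function W
  have hfunW : ∀ t ∈ Set.Ioi (0:ℝ),
      (∑ j ∈ Finset.range 3, e j * t ^ j) * K t + C₂/δ^4 * (Φ t * K t)
        = (ε * (t-x)^2 + C₂/δ^4 * Φ t) * K t := by
    intro t ht
    rw [← hesum t]
    ring
  have hIW : IntegrableOn (fun t => (ε * (t-x)^2 + C₂/δ^4 * Φ t) * K t) (Set.Ioi 0) :=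
    IntegrableOn.congr_fun (hIe.add (hIΦ.const_mul (C₂/δ^4))) hfunW measurableSet_Ioi
  have hVW : ∫ t in Set.Ioi (0:ℝ), (ε * (t-x)^2 + C₂/δ^4 * Φ t) * K t
      = ε*(x*b) + C₂/δ^4 * (b^2 * NbPoly x b / (x - b)) := by
    rw [← setIntegral_congr_fun measurableSet_Ioi hfunW,
      integral_add hIe (hIΦ.const_mul (C₂/δ^4)), hVe, hVe', integral_const_mul, hVΦ]
  -- final chain
  have hnum : (∫ t in Set.Ioi (0:ℝ), f t * Real.log t * K t) - gx - x*b/2*G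
      = ∫ t in Set.Ioi (0:ℝ), T t * K t := by
    rw [hVT]; ring
  rw [hnum]
  calc |∫ t in Set.Ioi (0:ℝ), T t * K t|
      ≤ ∫ t in Set.Ioi (0:ℝ), ‖T t * K t‖ := by
        rw [← Real.norm_eq_abs]
        exact norm_integral_le_integral_norm _
    _ ≤ ∫ t in Set.Ioi (0:ℝ), (ε * (t-x)^2 + C₂/δ^4 * Φ t) * K t := by
        refine setIntegral_mono_on hIT.norm hIW measurableSet_Ioi (fun t ht => ?_)
        have hKnn : 0 ≤ K t := gk_nonneg hx hb ht
        rw [norm_mul, Real.norm_eq_abs, Real.norm_eq_abs, abs_of_nonneg hKnn]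
        exact mul_le_mul_of_nonneg_right (hglob t ht) hKnn
    _ = ε * x * b + C₂/δ^4 * (b^2 * NbPoly x b / (x - b)) := by
        rw [hVW]; ring
end core

set_option maxHeartbeats 2000000 in
theorem gammaKernel_log_bias_expansion (x : ℝ) (hx : 0 < x) (f : ℝ → ℝ)
    (hf : ContDiffOn ℝ 2 f (Set.Ioi 0))
    (hbdd : ∃ C : ℝ, ∀ t ∈ Set.Ioi (0 : ℝ),
      |f t| ≤ C ∧ |deriv f t| ≤ C ∧ |deriv (deriv f) t| ≤ C) :
    Tendsto (fun b : ℝ =>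
        ((∫ t in Set.Ioi (0 : ℝ), f t * Real.log t * gammaKernel x b t)
          - f x * Real.log x
          - x * b / 2 * (deriv (deriv f) x * Real.log x + 2 * deriv f x / x
              - f x / x ^ 2)) / b)
      (nhdsWithin 0 (Set.Ioi 0)) (nhds 0) := by
  obtain ⟨C, hC⟩ := hbdd
  set G : ℝ := deriv (deriv f) x * Real.log x + 2 * deriv f x / x - f x / x ^ 2 with hG
  set C₂ : ℝ := C + |f x * Real.log x| + |deriv f x * Real.log x + f x * x⁻¹| + |G| with hC₂
  have hC0 : 0 ≤ C := le_trans (abs_nonneg _) (hC 1 (by norm_num)).1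
  have hC₂0 : 0 ≤ C₂ := by positivity
  rw [Metric.tendsto_nhdsWithin_nhds]
  intro ε' hε'
  set ε : ℝ := ε' / (2 * (x + 1)) with hε
  have hεpos : 0 < ε := by positivity
  -- continuity of the second derivative expression at x
  have hv : ContinuousAt
      (fun y => deriv (deriv f) y * Real.log y + 2 * deriv f y / y - f y / y ^ 2) x :=
    (continuousOn_g'' hf).continuousAt (Ioi_mem_nhds hx)
  obtain ⟨δ₀, hδ₀, hδ₀p⟩ := Metric.continuousAt_iff.mp hv ε hεpos
  set δ : ℝ := min (δ₀ / 2) (x / 2) with hδdef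
  have hδ : 0 < δ := lt_min (by linarith) (by linarith)
  have hδx : δ ≤ x / 2 := min_le_right _ _
  have hnear : ∀ y ∈ Set.Icc (x - δ) (x + δ),
      |(deriv (deriv f) y * Real.log y + 2 * deriv f y / y - f y / y ^ 2)
        - (deriv (deriv f) x * Real.log x + 2 * deriv f x / x - f x / x ^ 2)| ≤ ε := by
    intro y hy
    have h1 : |y - x| ≤ δ := by
      rw [abs_le]; constructor <;> [linarith [hy.1]; linarith [hy.2]]
    have h2 : dist y x < δ₀ := by
      rw [Real.dist_eq]
      calc |y - x| ≤ δ := h1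
        _ ≤ δ₀ / 2 := min_le_left _ _
        _ < δ₀ := by linarith
    have := hδ₀p h2
    rw [Real.dist_eq] at this
    exact le_of_lt this
  -- the coefficient bound M for |NbPoly x b| on 0 < b ≤ 1
  set M : ℝ := 152*x + 18*x^2 + 141*x^3 + 18*x^4 with hM
  have hMpos : 0 < M := by positivity
  set κ : ℝ := (C₂ / δ^4) * (2 * M / x) with hκ
  have hκ0 : 0 ≤ κ := by positivity
  refine ⟨min (min 1 (x/2)) ((ε'/2) / (κ + 1)), by positivity, ?_⟩
  intro b hbmem hbd
  have hb : 0 < b := hbmem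
  rw [Real.dist_eq, sub_zero] at hbd
  rw [abs_of_pos hb] at hbd
  have hb1 : b ≤ 1 := le_of_lt (lt_of_lt_of_le hbd (le_trans (min_le_left _ _) (min_le_left _ _)))
  have hbx2 : b < x / 2 := lt_of_lt_of_le hbd (le_trans (min_le_left _ _) (min_le_right _ _))
  have hbκ : b < (ε'/2) / (κ + 1) := lt_of_lt_of_le hbd (min_le_right _ _)
  have hbx : b < x := by linarith
  have hxb2 : x / 2 ≤ x - b := by linarith
  -- core bound
  have hcore := gk_core hx hb hbx hf hC (le_of_lt hεpos) hδ hδx hnear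
  rw [Real.dist_eq, sub_zero, abs_div, abs_of_pos hb]
  -- bound |NbPoly x b| ≤ M
  have hNbound : |NbPoly x b| ≤ M := by
    rw [abs_le]
    unfold NbPoly
    constructor <;> nlinarith [sq_nonneg b, sq_nonneg (b-1), pow_pos hb 2, pow_pos hb 3,
      pow_pos hb 4, pow_pos hx 2, pow_pos hx 3, pow_pos hx 4,
      mul_pos (pow_pos hb 2) hx, mul_pos (pow_pos hb 3) hx, mul_pos (pow_pos hb 4) hx,
      pow_le_one₀ (le_of_lt hb) hb1 (n := 2), pow_le_one₀ (le_of_lt hb) hb1 (n := 3),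
      pow_le_one₀ (le_of_lt hb) hb1 (n := 4)]
  -- bound the second term
  have hterm : (C₂ / δ^4) * (b^2 * NbPoly x b / (x - b)) ≤ b^2 * κ := by
    have hxb0 : (0:ℝ) < x - b := by linarith
    have hup : b^2 * NbPoly x b ≤ b^2 * M :=
      mul_le_mul_of_nonneg_left (le_trans (le_abs_self _) hNbound) (by positivity)
    have h1 : b^2 * NbPoly x b / (x - b) ≤ b^2 * (2*M/x) := by
      calc b^2 * NbPoly x b / (x - b) ≤ b^2 * M / (x - b) :=
            (div_le_div_iff_of_pos_right hxb0).mpr hup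
        _ ≤ b^2 * M / (x/2) :=
            div_le_div_of_nonneg_left (by positivity) (by positivity) hxb2
        _ = b^2 * (2*M/x) := by field_simp
    calc (C₂ / δ^4) * (b^2 * NbPoly x b / (x - b)) ≤ (C₂ / δ^4) * (b^2 * (2*M/x)) :=
          mul_le_mul_of_nonneg_left h1 (by positivity)
      _ = b^2 * κ := by rw [hκ]; ring
  have hεx : ε * x < ε' / 2 := by
    rw [hε, div_mul_eq_mul_div, div_lt_iff₀ (by positivity : (0:ℝ) < 2*(x+1))]
    nlinarith
  have hbκ2 : b * κ < ε' / 2 := by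
    rw [lt_div_iff₀ (by positivity : (0:ℝ) < κ + 1)] at hbκ
    nlinarith
  rw [div_lt_iff₀ hb]
  calc |(∫ t in Set.Ioi (0:ℝ), f t * Real.log t * gammaKernel x b t)
        - f x * Real.log x - x * b / 2 * G|
      ≤ ε * x * b + (C₂ / δ^4) * (b^2 * NbPoly x b / (x - b)) := hcore
    _ ≤ ε * x * b + b^2 * κ := by linarith
    _ < ε' * b := by nlinarith
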